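/- For 0 ≤ k ≤ (n-1)/2, the incomplete q-Chebyshev polynomials of the second kind satisfy the recurrence U_{n+2}^{k+1}(x,s,q) = (1+q^{n+2}) x U_{n+1}^{k+1}(x,s,q) + q^{n+1} s U_n^k(x,s,q). -/

import Mathlib

/-- q-integer [n]_q = (1-q^n)/(1-q). -/
noncomputable def qint (q : ℂ) (n : ℕ) : ℂ := (1 - q ^ n) / (1 - q)

/-- q-factorial [n]_q!. -/
noncomputable def qfact (q : ℂ) (n : ℕ) : ℂ := ∏ i ∈ Finset.range n, qint q (i + 1)

/-- Gaussian (q-binomial) coefficient, 0 for k > n. -/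
noncomputable def qbinom (q : ℂ) (n k : ℕ) : ℂ :=
  if k ≤ n then qfact q n / (qfact q (n - k) * qfact q k) else 0

/-- q-shifted factorial (x;q)_n. -/
noncomputable def qpoch (x q : ℂ) (n : ℕ) : ℂ := ∏ i ∈ Finset.range n, (1 - q ^ i * x)

/-- Partial sum defining incomplete q-Chebyshev polynomials of the second kind:
`Usum x s q n (k+1)` is U_n^k(x,s,q), and `Usum x s q n 0 = 0` is the empty sum (k = -1). -/
noncomputable def Usum (x s q : ℂ) (n m : ℕ) : ℂ :=
  ∑ j ∈ Finset.range m,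
    q ^ (j ^ 2) * qbinom q (n - j) j * (qpoch (-q) q (n - j) / qpoch (-q) q j) *
      s ^ j * x ^ (n - 2 * j)

/-- Partial sum defining incomplete q-Chebyshev polynomials of the first kind:
`Tsum x s q n (k+1)` is T_n^k(x,s,q). -/
noncomputable def Tsum (x s q : ℂ) (n m : ℕ) : ℂ :=
  ∑ j ∈ Finset.range m,
    q ^ (j ^ 2) * (qint q n / qint q (n - j)) * qbinom q (n - j) j *
      (qpoch (-q) q (n - j - 1) / qpoch (-q) q j) * s ^ j * x ^ (n - 2 * j)


variable {q : ℂ}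

lemma one_sub_pow_ne (hq1 : ‖q‖ < 1) {m : ℕ} (hm : m ≠ 0) : (1 : ℂ) - q ^ m ≠ 0 := by
  intro h
  have h2 : q ^ m = 1 := by linear_combination -h
  have h3 := congrArg (‖·‖) h2
  rw [norm_pow, norm_one] at h3
  have hlt : ‖q‖ ^ m < 1 := pow_lt_one₀ (norm_nonneg q) hq1 hm
  rw [h3] at hlt; exact lt_irrefl 1 hlt

lemma one_add_pow_ne (hq1 : ‖q‖ < 1) {m : ℕ} (hm : m ≠ 0) : (1 : ℂ) + q ^ m ≠ 0 := by
  intro h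
  have h2 : q ^ m = -1 := by linear_combination h
  have h3 := congrArg (‖·‖) h2
  rw [norm_pow] at h3
  simp at h3
  have hlt : ‖q‖ ^ m < 1 := pow_lt_one₀ (norm_nonneg q) hq1 hm
  rw [h3] at hlt; exact lt_irrefl 1 hlt

lemma one_sub_ne (hq1 : ‖q‖ < 1) : (1 : ℂ) - q ≠ 0 := by
  have := one_sub_pow_ne hq1 (one_ne_zero (α := ℕ))
  simpa using this

lemma qint_ne (hq1 : ‖q‖ < 1) {m : ℕ} (hm : m ≠ 0) : qint q m ≠ 0 :=
  div_ne_zero (one_sub_pow_ne hq1 hm) (one_sub_ne hq1)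

lemma qfact_ne (hq1 : ‖q‖ < 1) (m : ℕ) : qfact q m ≠ 0 :=
  Finset.prod_ne_zero_iff.mpr fun i _ => qint_ne hq1 (Nat.succ_ne_zero i)

lemma qpoch_ne (hq1 : ‖q‖ < 1) (m : ℕ) : qpoch (-q) q m ≠ 0 := by
  refine Finset.prod_ne_zero_iff.mpr fun i _ => ?_
  have : (1 : ℂ) - q ^ i * -q = 1 + q ^ (i + 1) := by ring
  rw [this]
  exact one_add_pow_ne hq1 (Nat.succ_ne_zero i)

lemma qpoch_succ (m : ℕ) : qpoch (-q) q (m + 1) = qpoch (-q) q m * (1 + q ^ (m + 1)) := by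
  rw [qpoch, Finset.prod_range_succ, ← qpoch]; ring

lemma qfact_succ (m : ℕ) : qfact q (m + 1) = qfact q m * qint q (m + 1) := by
  rw [qfact, Finset.prod_range_succ, ← qfact]

lemma qbinom_zero (hq1 : ‖q‖ < 1) (a : ℕ) : qbinom q a 0 = 1 := by
  rw [qbinom, if_pos (Nat.zero_le a)]
  simp [qfact]
  exact qfact_ne hq1 a

set_option maxHeartbeats 2000000 in
lemma term_id (hq1 : ‖q‖ < 1) (x s : ℂ) (n j : ℕ) (h : 2 * j + 1 ≤ n) :
    q ^ ((j+1) ^ 2) * qbinom q (n + 2 - (j+1)) (j+1) *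
        (qpoch (-q) q (n + 2 - (j+1)) / qpoch (-q) q (j+1)) * s ^ (j+1) * x ^ (n + 2 - 2 * (j+1))
      = (1 + q ^ (n + 2)) * x *
          (q ^ ((j+1) ^ 2) * qbinom q (n + 1 - (j+1)) (j+1) *
            (qpoch (-q) q (n + 1 - (j+1)) / qpoch (-q) q (j+1)) * s ^ (j+1) *
            x ^ (n + 1 - 2 * (j+1)))
        + q ^ (n + 1) * s *
          (q ^ (j ^ 2) * qbinom q (n - j) j * (qpoch (-q) q (n - j) / qpoch (-q) q j) * s ^ j *
            x ^ (n - 2 * j)) := by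
  obtain ⟨m, rfl⟩ : ∃ m, n = 2 * j + 1 + m := ⟨n - (2 * j + 1), by omega⟩
  have e1 : 2*j+1+m + 2 - (j+1) = (j+1+m) + 1 := by omega
  have e2 : 2*j+1+m + 1 - (j+1) = j+1+m := by omega
  have e3 : 2*j+1+m - j = j+1+m := by omega
  have e4 : 2*j+1+m + 2 - 2*(j+1) = m + 1 := by omega
  have e5 : 2*j+1+m + 1 - 2*(j+1) = m := by omega
  have e6 : 2*j+1+m - 2*j = m + 1 := by omega
  rw [e1, e2, e3, e4, e5, e6]
  rw [qbinom, qbinom, qbinom, if_pos (by omega), if_pos (by omega), if_pos (by omega)]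
  have f1 : j+1+m + 1 - (j+1) = m + 1 := by omega
  have f2 : j+1+m - (j+1) = m := by omega
  have f3 : j+1+m - j = m + 1 := by omega
  rw [f1, f2, f3]
  rw [qfact_succ (j+1+m), qfact_succ m, qfact_succ j, qpoch_succ (j+1+m), qpoch_succ j]
  have hF1 := qfact_ne hq1 (j+1+m)
  have hF2 := qfact_ne hq1 m
  have hF3 := qfact_ne hq1 j
  have hP1 := qpoch_ne hq1 (j+1+m)
  have hP2 := qpoch_ne hq1 j
  have hq := one_sub_ne hq1
  have p1 : q ^ ((j+1)^2) = q^(j^2) * (q^j)^2 * q := by ring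
  have p2 : q ^ (2*j+1+m+2) = (q^j)^2 * q^m * q^3 := by ring
  have p3 : q ^ (2*j+1+m+1) = (q^j)^2 * q^m * q^2 := by ring
  have p4 : q ^ (j+1+m+1) = q^j * q^m * q^2 := by ring
  have p5 : q ^ (m+1) = q^m * q := by ring
  have p6 : q ^ (j+1) = q^j * q := by ring
  have hA2 : (1:ℂ) - q ^ m * q ≠ 0 := by rw [← p5]; exact one_sub_pow_ne hq1 (by omega)
  have hA3 : (1:ℂ) - q ^ j * q ≠ 0 := by rw [← p6]; exact one_sub_pow_ne hq1 (by omega)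
  have hB1 : (1:ℂ) + q ^ j * q ^ m * q ^ 2 ≠ 0 := by
    rw [← p4]; exact one_add_pow_ne hq1 (by omega)
  have hB2 : (1:ℂ) + q ^ j * q ≠ 0 := by rw [← p6]; exact one_add_pow_ne hq1 (by omega)
  simp only [qint, p1, p2, p3, p4, p5, p6]
  generalize q ^ (j^2) = w at *
  generalize hu : q ^ j = u at *
  generalize hv : q ^ m = v at *
  generalize qfact q (j+1+m) = A at *
  generalize qfact q m = B at *
  generalize qfact q j = C at *
  generalize qpoch (-q) q (j+1+m) = Pa at *
  generalize qpoch (-q) q j = Pj at *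
  have g1 : A * ((1 - u*v*q^2)/(1-q)) / (B * ((1 - v*q)/(1-q)) * (C * ((1 - u*q)/(1-q))))
      = A * (1 - u*v*q^2) * (1-q) / (B * (1 - v*q) * (C * (1 - u*q))) := by
    field_simp
  have g2 : A / (B * (C * ((1 - u*q)/(1-q)))) = A * (1-q) / (B * (C * (1 - u*q))) := by
    field_simp
  have g3 : A / (B * ((1 - v*q)/(1-q)) * C) = A * (1-q) / (B * (1 - v*q) * C) := by
    field_simp
  rw [g1, g2, g3]
  have hE1 : (1:ℂ) - u^2*q^2 ≠ 0 := by
    have h' : ((1:ℂ)-u*q)*(1+u*q) = 1 - u^2*q^2 := by ring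
    rw [← h']; exact mul_ne_zero hA3 hB2
  have hE2 : -(u^2*q^2) + (u^2*q^3*v - q*v) + 1 ≠ 0 := by
    have h' : ((1:ℂ)-u^2*q^2)*(1-q*v) = -(u^2*q^2) + (u^2*q^3*v - q*v) + 1 := by ring
    rw [← h']
    refine mul_ne_zero hE1 ?_
    have h'' : (1:ℂ) - q*v = 1 - v*q := by ring
    rw [h'']; exact hA2
  have hE3 : -(u ^ 2 * q ^ 2 * B ^ 2 * C ^ 2 * Pj ^ 2) +
        (u ^ 2 * q ^ 3 * v * B ^ 2 * C ^ 2 * Pj ^ 2 - q * v * B ^ 2 * C ^ 2 * Pj ^ 2) +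
        B ^ 2 * C ^ 2 * Pj ^ 2 ≠ 0 := by
    have h' : -(u ^ 2 * q ^ 2 * B ^ 2 * C ^ 2 * Pj ^ 2) +
        (u ^ 2 * q ^ 3 * v * B ^ 2 * C ^ 2 * Pj ^ 2 - q * v * B ^ 2 * C ^ 2 * Pj ^ 2) +
        B ^ 2 * C ^ 2 * Pj ^ 2 =
        (B*C*Pj)^2 * (-(u ^ 2 * q ^ 2) + (u ^ 2 * q ^ 3 * v - q * v) + 1) := by ring
    rw [h']
    exact mul_ne_zero (pow_ne_zero 2 (mul_ne_zero (mul_ne_zero hF2 hF3) hP2)) hE2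
  field_simp
  have hqv : (1:ℂ) - q * v ≠ 0 := by rw [mul_comm]; exact hA2
  field_simp
  ring


theorem Uinc_rec (q : ℂ) (hq0 : 0 < ‖q‖) (hq1 : ‖q‖ < 1)
    (x s : ℂ) (n k : ℕ) (hk : 2 * k + 1 ≤ n) :
    Usum x s q (n + 2) (k + 2) =
      (1 + q ^ (n + 2)) * x * Usum x s q (n + 1) (k + 2) +
        q ^ (n + 1) * s * Usum x s q n (k + 1) := by
  simp only [Usum, Finset.sum_range_succ']
  have hbig : ∑ i ∈ Finset.range k,
      q ^ (i + 1 + 1) ^ 2 * qbinom q (n + 2 - (i + 1 + 1)) (i + 1 + 1) *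
          (qpoch (-q) q (n + 2 - (i + 1 + 1)) / qpoch (-q) q (i + 1 + 1)) * s ^ (i + 1 + 1) *
        x ^ (n + 2 - 2 * (i + 1 + 1))
      = ∑ i ∈ Finset.range k,
        ((1 + q ^ (n + 2)) * x *
            (q ^ (i + 1 + 1) ^ 2 * qbinom q (n + 1 - (i + 1 + 1)) (i + 1 + 1) *
              (qpoch (-q) q (n + 1 - (i + 1 + 1)) / qpoch (-q) q (i + 1 + 1)) * s ^ (i + 1 + 1) *
              x ^ (n + 1 - 2 * (i + 1 + 1)))
          + q ^ (n + 1) * s *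
            (q ^ (i + 1) ^ 2 * qbinom q (n - (i + 1)) (i + 1) *
              (qpoch (-q) q (n - (i + 1)) / qpoch (-q) q (i + 1)) * s ^ (i + 1) *
              x ^ (n - 2 * (i + 1)))) :=
    Finset.sum_congr rfl fun i hi => term_id hq1 x s n (i + 1)
      (by have := Finset.mem_range.mp hi; omega)
  rw [hbig, Finset.sum_add_distrib, ← Finset.mul_sum, ← Finset.mul_sum]
  have h1 := term_id hq1 x s n 0 (by omega)
  rw [h1]
  have e0 : qpoch (-q) q 0 = 1 := by simp [qpoch]
  have h0 : q ^ 0 ^ 2 * qbinom q (n + 2 - 0) 0 * (qpoch (-q) q (n + 2 - 0) / qpoch (-q) q 0) *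
        s ^ 0 * x ^ (n + 2 - 2 * 0)
      = (1 + q ^ (n + 2)) * x *
        (q ^ 0 ^ 2 * qbinom q (n + 1 - 0) 0 * (qpoch (-q) q (n + 1 - 0) / qpoch (-q) q 0) *
          s ^ 0 * x ^ (n + 1 - 2 * 0)) := by
    simp only [pow_zero, Nat.sub_zero, Nat.mul_zero, mul_one, one_mul, qbinom_zero hq1, e0,
      div_one]
    rw [show n + 2 = (n + 1) + 1 from rfl, qpoch_succ (n + 1), pow_succ]
    ring
  rw [h0]
  ring
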